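/- Let n be a positive integer, let d ≥ 2, and let U be a d-bounded multilinear Littlewood family on n variables (every S ∈ U satisfies 1 ≤ |S| ≤ d). Write u_i = |{S ∈ U : i ∈ S}|. Then for every choice of signs h_S ∈ {−1,+1} for S ∈ U, there exists x ∈ {−1,+1}^n such that |∑_{S ∈ U} h_S ∏_{i ∈ S} x_i| ≥ (1 / (3^{d−1} · 2^{5/2} · (d−1)^{3/2} · d)) · ∑_{i=1}^n √(u_i). -/

import Mathlib

open Finset

namespace LB

variable {n : ℕ}

/-- sign of a boolean cube point -/
def sgn (ε : Fin n → Bool) (i : Fin n) : ℝ := if ε i then 1 else -1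

/-- character -/
def chi (ε : Fin n → Bool) (S : Finset (Fin n)) : ℝ := ∏ i ∈ S, sgn ε i

lemma sgn_sq (ε : Fin n → Bool) (i : Fin n) : sgn ε i ^ 2 = 1 := by
  unfold sgn; split <;> norm_num

lemma abs_sgn (ε : Fin n → Bool) (i : Fin n) : |sgn ε i| = 1 := by
  unfold sgn; split <;> norm_num

def flip (j : Fin n) (ε : Fin n → Bool) : Fin n → Bool := Function.update ε j (! ε j)

lemma flip_involutive (j : Fin n) : Function.Involutive (flip j) := by
  intro ε
  funext i
  by_cases hij : i = j
  · subst hij; simp [flip]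
  · simp [flip, Function.update_of_ne hij]

lemma sum_flip (j : Fin n) (F : (Fin n → Bool) → ℝ) :
    ∑ ε : Fin n → Bool, F ε = ∑ ε : Fin n → Bool, F (flip j ε) := by
  exact (Fintype.sum_bijective (flip j) (flip_involutive j).bijective (fun ε => F (flip j ε)) F (fun ε => rfl)).symm

lemma sgn_flip_ne (j : Fin n) (ε : Fin n → Bool) {i : Fin n} (hij : i ≠ j) :
    sgn (flip j ε) i = sgn ε i := by
  simp [sgn, flip, Function.update_of_ne hij]

lemma sgn_flip_self (j : Fin n) (ε : Fin n → Bool) :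
    sgn (flip j ε) j = - sgn ε j := by
  simp [sgn, flip]
  cases h : ε j <;> simp [h]

lemma chi_flip_not_mem (j : Fin n) (ε : Fin n → Bool) {S : Finset (Fin n)} (hj : j ∉ S) :
    chi (flip j ε) S = chi ε S := by
  unfold chi
  exact Finset.prod_congr rfl (fun i hi => sgn_flip_ne j ε (fun h => hj (h ▸ hi)))

lemma chi_erase (j : Fin n) (ε : Fin n → Bool) {S : Finset (Fin n)} (hj : j ∈ S) :
    chi ε S = sgn ε j * chi ε (S.erase j) := by
  unfold chi
  exact (Finset.mul_prod_erase S _ hj).symm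

lemma card_cube : (Finset.univ : Finset (Fin n → Bool)).card = 2 ^ n := by
  simp [Finset.card_univ]


section decomp

variable (V : Finset (Finset (Fin n))) (a : Finset (Fin n) → ℝ) (j : Fin n)

/-- the part not containing j -/
noncomputable def gpart (ε : Fin n → Bool) : ℝ :=
  ∑ S ∈ V.filter (fun S => j ∉ S), a S * chi ε S

/-- the derivative part -/
noncomputable def hpart (ε : Fin n → Bool) : ℝ :=
  ∑ S ∈ V.filter (fun S => j ∈ S), a S * chi ε (S.erase j)

lemma decomp (ε : Fin n → Bool) :
    ∑ S ∈ V, a S * chi ε S = gpart V a j ε + sgn ε j * hpart V a j ε := by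
  rw [← Finset.sum_filter_add_sum_filter_not V (fun S => j ∈ S)]
  rw [add_comm]
  unfold gpart hpart
  congr 1
  rw [Finset.mul_sum]
  refine Finset.sum_congr rfl (fun S hS => ?_)
  have hj : j ∈ S := (Finset.mem_filter.mp hS).2
  rw [chi_erase j ε hj]; ring

lemma gpart_flip (ε : Fin n → Bool) : gpart V a j (flip j ε) = gpart V a j ε := by
  unfold gpart
  refine Finset.sum_congr rfl (fun S hS => ?_)
  rw [chi_flip_not_mem j ε (Finset.mem_filter.mp hS).2]

lemma hpart_flip (ε : Fin n → Bool) : hpart V a j (flip j ε) = hpart V a j ε := by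
  unfold hpart
  refine Finset.sum_congr rfl (fun S hS => ?_)
  rw [chi_flip_not_mem j ε (Finset.notMem_erase j S)]

lemma erase_injOn :
    Set.InjOn (fun S => Finset.erase S j) (V.filter (fun S => j ∈ S)) := by
  intro S1 h1 S2 h2 hEq
  simp only [Finset.coe_filter, Set.mem_setOf_eq] at h1 h2
  have hj1 : j ∈ S1 := h1.2
  have hj2 : j ∈ S2 := h2.2
  rw [← Finset.insert_erase hj1, ← Finset.insert_erase hj2]
  simp only at hEq
  rw [hEq]

lemma hpart_eq_image (ε : Fin n → Bool) :
    hpart V a j ε =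
      ∑ T ∈ (V.filter (fun S => j ∈ S)).image (fun S => Finset.erase S j),
        a (insert j T) * chi ε T := by
  rw [Finset.sum_image (fun S h1 S' h2 hEq => erase_injOn V j h1 h2 hEq)]
  unfold hpart
  refine Finset.sum_congr rfl (fun S hS => ?_)
  rw [Finset.insert_erase (Finset.mem_filter.mp hS).2]

lemma sum_sq_image :
    ∑ T ∈ (V.filter (fun S => j ∈ S)).image (fun S => Finset.erase S j),
        (a (insert j T))^2 = ∑ S ∈ V.filter (fun S => j ∈ S), (a S)^2 := by
  rw [Finset.sum_image (fun S h1 S' h2 hEq => erase_injOn V j h1 h2 hEq)]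
  refine Finset.sum_congr rfl (fun S hS => ?_)
  rw [Finset.insert_erase (Finset.mem_filter.mp hS).2]

end decomp

theorem parseval (J : Finset (Fin n)) :
    ∀ (V : Finset (Finset (Fin n))) (a : Finset (Fin n) → ℝ),
    (∀ S ∈ V, S ⊆ J) →
    ∑ ε : Fin n → Bool, (∑ S ∈ V, a S * chi ε S)^2
      = 2^n * ∑ S ∈ V, (a S)^2 := by
  induction J using Finset.induction_on with
  | empty =>
    intro V a hV
    have hV' : V ⊆ {∅} := fun S hS => by
      simp [Finset.subset_empty.mp (hV S hS)]
    rcases Finset.subset_singleton_iff.mp hV' with h0 | h0 <;> subst h0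
    · simp
    · simp [chi, Finset.sum_const, card_cube, mul_comm]
  | @insert j J hjJ ih =>
    intro V a hV
    set g := gpart V a j
    set h := hpart V a j
    have key : ∀ ε : Fin n → Bool,
        (∑ S ∈ V, a S * chi ε S)^2 + (∑ S ∈ V, a S * chi (flip j ε) S)^2
          = 2 * ((g ε)^2 + (h ε)^2) := by
      intro ε
      rw [decomp V a j ε, decomp V a j (flip j ε), gpart_flip, hpart_flip, sgn_flip_self]
      have hs : sgn ε j ^ 2 = 1 := sgn_sq ε j
      nlinarith [hs]
    have h2 : 2 * ∑ ε : Fin n → Bool, (∑ S ∈ V, a S * chi ε S)^2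
        = 2 * (∑ ε : Fin n → Bool, (g ε)^2 + ∑ ε : Fin n → Bool, (h ε)^2) := by
      calc 2 * ∑ ε : Fin n → Bool, (∑ S ∈ V, a S * chi ε S)^2
          = ∑ ε : Fin n → Bool, (∑ S ∈ V, a S * chi ε S)^2
            + ∑ ε : Fin n → Bool, (∑ S ∈ V, a S * chi (flip j ε) S)^2 := by
            rw [← sum_flip j (fun ε => (∑ S ∈ V, a S * chi ε S)^2)]; ring
        _ = ∑ ε : Fin n → Bool, ((∑ S ∈ V, a S * chi ε S)^2 + (∑ S ∈ V, a S * chi (flip j ε) S)^2) := by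
            rw [Finset.sum_add_distrib]
        _ = ∑ ε : Fin n → Bool, 2 * ((g ε)^2 + (h ε)^2) := by
            exact Finset.sum_congr rfl (fun ε _ => key ε)
        _ = 2 * (∑ ε : Fin n → Bool, (g ε)^2 + ∑ ε : Fin n → Bool, (h ε)^2) := by
            rw [← Finset.sum_add_distrib, Finset.mul_sum]
    have hmain : ∑ ε : Fin n → Bool, (∑ S ∈ V, a S * chi ε S)^2
        = ∑ ε : Fin n → Bool, (g ε)^2 + ∑ ε : Fin n → Bool, (h ε)^2 := by
      linarith [h2]
    have hg : ∑ ε : Fin n → Bool, (g ε)^2 = 2^n * ∑ S ∈ V.filter (fun S => j ∉ S), (a S)^2 := by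
      apply ih
      intro S hS
      have := hV S (Finset.mem_filter.mp hS).1
      have hjS := (Finset.mem_filter.mp hS).2
      intro i hi
      rcases Finset.mem_insert.mp (this hi) with rfl | hiJ
      · exact absurd hi hjS
      · exact hiJ
    have hh : ∑ ε : Fin n → Bool, (h ε)^2 = 2^n * ∑ S ∈ V.filter (fun S => j ∈ S), (a S)^2 := by
      have := ih ((V.filter (fun S => j ∈ S)).image (fun S => Finset.erase S j))
        (fun T => a (insert j T)) ?_
      · calc ∑ ε : Fin n → Bool, (h ε)^2
            = ∑ ε : Fin n → Bool,
              (∑ T ∈ (V.filter (fun S => j ∈ S)).image (fun S => Finset.erase S j),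
                a (insert j T) * chi ε T)^2 := by
              exact Finset.sum_congr rfl (fun ε _ => by rw [show h ε = _ from hpart_eq_image V a j ε])
          _ = 2^n * ∑ S ∈ V.filter (fun S => j ∈ S), (a S)^2 := by
              rw [this, sum_sq_image]
      · intro T hT
        obtain ⟨S, hS, rfl⟩ := Finset.mem_image.mp hT
        have hSV := (Finset.mem_filter.mp hS).1
        intro i hi
        have hiS : i ∈ S := Finset.mem_of_mem_erase hi
        have hij : i ≠ j := Finset.ne_of_mem_erase hi
        rcases Finset.mem_insert.mp (hV S hSV hiS) with h' | h'
        · exact absurd h' hij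
        · exact h'
    rw [hmain, hg, hh, ← mul_add,
      add_comm (∑ S ∈ V.filter (fun S => j ∉ S), (a S)^2),
      Finset.sum_filter_add_sum_filter_not V (fun S => j ∈ S)]


theorem hyper (J : Finset (Fin n)) :
    ∀ (k : ℕ) (V : Finset (Finset (Fin n))) (a : Finset (Fin n) → ℝ),
    (∀ S ∈ V, S ⊆ J) → (∀ S ∈ V, S.card ≤ k) →
    ∑ ε : Fin n → Bool, (∑ S ∈ V, a S * chi ε S)^4
      ≤ 9^k * 2^n * (∑ S ∈ V, (a S)^2)^2 := by
  induction J using Finset.induction_on with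
  | empty =>
    intro k V a hV _
    have hV' : V ⊆ {∅} := fun S hS => by
      simp [Finset.subset_empty.mp (hV S hS)]
    have h9 : (1:ℝ) ≤ 9^k := one_le_pow₀ (by norm_num)
    rcases Finset.subset_singleton_iff.mp hV' with h0 | h0 <;> subst h0
    · simp
    · simp only [chi, Finset.prod_empty, mul_one, Finset.sum_singleton, Finset.sum_const,
        card_cube, nsmul_eq_mul]
      have : (a ∅)^4 = ((a ∅)^2)^2 := by ring
      rw [this]
      push_cast
      have hnn : (0:ℝ) ≤ (2:ℝ)^n * ((a ∅)^2)^2 := by positivity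
      nlinarith [hnn, h9]
  | @insert j J hjJ ih =>
    intro k V a hV hdeg
    set g := gpart V a j with hgdef
    set h := hpart V a j with hhdef
    -- the flip identity for fourth powers
    have key : ∀ ε : Fin n → Bool,
        (∑ S ∈ V, a S * chi ε S)^4 + (∑ S ∈ V, a S * chi (flip j ε) S)^4
          = 2 * ((g ε)^4 + 6 * (g ε)^2 * (h ε)^2 + (h ε)^4) := by
      intro ε
      rw [decomp V a j ε, decomp V a j (flip j ε), gpart_flip, hpart_flip, sgn_flip_self]
      have hs : sgn ε j ^ 2 = 1 := sgn_sq ε j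
      linear_combination (12 * (gpart V a j ε)^2 * (hpart V a j ε)^2
        + 2 * (hpart V a j ε)^4 * (sgn ε j ^ 2 + 1)) * hs
    have hmain : ∑ ε : Fin n → Bool, (∑ S ∈ V, a S * chi ε S)^4
        = ∑ ε : Fin n → Bool, (g ε)^4
          + 6 * ∑ ε : Fin n → Bool, (g ε)^2 * (h ε)^2
          + ∑ ε : Fin n → Bool, (h ε)^4 := by
      have h2 : 2 * ∑ ε : Fin n → Bool, (∑ S ∈ V, a S * chi ε S)^4
          = ∑ ε : Fin n → Bool, 2 * ((g ε)^4 + 6 * (g ε)^2 * (h ε)^2 + (h ε)^4) := by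
        calc 2 * ∑ ε : Fin n → Bool, (∑ S ∈ V, a S * chi ε S)^4
            = ∑ ε : Fin n → Bool, (∑ S ∈ V, a S * chi ε S)^4
              + ∑ ε : Fin n → Bool, (∑ S ∈ V, a S * chi (flip j ε) S)^4 := by
              rw [← sum_flip j (fun ε => (∑ S ∈ V, a S * chi ε S)^4)]; ring
          _ = ∑ ε : Fin n → Bool, ((∑ S ∈ V, a S * chi ε S)^4 + (∑ S ∈ V, a S * chi (flip j ε) S)^4) := by
              rw [Finset.sum_add_distrib]
          _ = ∑ ε : Fin n → Bool, 2 * ((g ε)^4 + 6 * (g ε)^2 * (h ε)^2 + (h ε)^4) := by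
              exact Finset.sum_congr rfl (fun ε _ => key ε)
      have h3 : ∑ ε : Fin n → Bool, 2 * ((g ε)^4 + 6 * (g ε)^2 * (h ε)^2 + (h ε)^4)
          = 2 * (∑ ε : Fin n → Bool, (g ε)^4
            + 6 * ∑ ε : Fin n → Bool, (g ε)^2 * (h ε)^2
            + ∑ ε : Fin n → Bool, (h ε)^4) := by
        have e : ∑ ε : Fin n → Bool, 2 * ((g ε)^4 + 6 * (g ε)^2 * (h ε)^2 + (h ε)^4)
            = ∑ ε : Fin n → Bool, (2 * (g ε)^4)
              + ∑ ε : Fin n → Bool, (12 * ((g ε)^2 * (h ε)^2))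
              + ∑ ε : Fin n → Bool, (2 * (h ε)^4) := by
          rw [← Finset.sum_add_distrib, ← Finset.sum_add_distrib]
          exact Finset.sum_congr rfl (fun ε _ => by ring)
        rw [e, ← Finset.mul_sum, ← Finset.mul_sum, ← Finset.mul_sum]
        ring
      rw [h3] at h2
      linarith [h2]
    set A0 := ∑ S ∈ V.filter (fun S => j ∉ S), (a S)^2 with hA0
    set A1 := ∑ S ∈ V.filter (fun S => j ∈ S), (a S)^2 with hA1
    have hA0nn : 0 ≤ A0 := Finset.sum_nonneg (fun S _ => sq_nonneg _)
    have hA1nn : 0 ≤ A1 := Finset.sum_nonneg (fun S _ => sq_nonneg _)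
    have hAsum : A0 + A1 = ∑ S ∈ V, (a S)^2 := by
      rw [hA0, hA1, add_comm, Finset.sum_filter_add_sum_filter_not V (fun S => j ∈ S)]
    -- V₀-support subset J
    have hV0J : ∀ S ∈ V.filter (fun S => j ∉ S), S ⊆ J := by
      intro S hS i hi
      rcases Finset.mem_insert.mp (hV S (Finset.mem_filter.mp hS).1 hi) with rfl | hiJ
      · exact absurd hi (Finset.mem_filter.mp hS).2
      · exact hiJ
    have hg4 : ∑ ε : Fin n → Bool, (g ε)^4 ≤ 9^k * 2^n * A0^2 :=
      ih k (V.filter (fun S => j ∉ S)) a hV0J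
        (fun S hS => hdeg S (Finset.mem_filter.mp hS).1)
    -- Parseval for g and h (for CS we only need the 4th moment bounds)
    by_cases hV1 : (V.filter (fun S => j ∈ S)) = ∅
    · -- h = 0 pointwise
      have hzero : ∀ ε, h ε = 0 := by
        intro ε; rw [hhdef]; unfold hpart; rw [hV1]; simp
      have : ∑ ε : Fin n → Bool, (∑ S ∈ V, a S * chi ε S)^4
          = ∑ ε : Fin n → Bool, (g ε)^4 := by
        rw [hmain]
        have e1 : ∑ ε : Fin n → Bool, (g ε)^2 * (h ε)^2 = 0 :=
          Finset.sum_eq_zero (fun ε _ => by rw [hzero ε]; ring)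
        have e2 : ∑ ε : Fin n → Bool, (h ε)^4 = 0 :=
          Finset.sum_eq_zero (fun ε _ => by rw [hzero ε]; ring)
        rw [e1, e2]; ring
      rw [this]
      have hA1z : A1 = 0 := by rw [hA1, hV1]; simp
      calc ∑ ε : Fin n → Bool, (g ε)^4 ≤ 9^k * 2^n * A0^2 := hg4
        _ = 9^k * 2^n * (∑ S ∈ V, (a S)^2)^2 := by rw [← hAsum, hA1z, add_zero]
    · -- k must be at least 1
      obtain ⟨S1, hS1⟩ := Finset.nonempty_of_ne_empty hV1
      have hk1 : 1 ≤ k := by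
        have hjS1 : j ∈ S1 := (Finset.mem_filter.mp hS1).2
        have := hdeg S1 (Finset.mem_filter.mp hS1).1
        have : 1 ≤ S1.card := Finset.card_pos.mpr ⟨j, hjS1⟩
        omega
      obtain ⟨k', rfl⟩ : ∃ k', k = k' + 1 := ⟨k - 1, by omega⟩
      -- bound for h via image family
      have hh4 : ∑ ε : Fin n → Bool, (h ε)^4 ≤ 9^k' * 2^n * A1^2 := by
        have him := ih k' ((V.filter (fun S => j ∈ S)).image (fun S => Finset.erase S j))
          (fun T => a (insert j T)) ?_ ?_
        · calc ∑ ε : Fin n → Bool, (h ε)^4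
              = ∑ ε : Fin n → Bool,
                (∑ T ∈ (V.filter (fun S => j ∈ S)).image (fun S => Finset.erase S j),
                  a (insert j T) * chi ε T)^4 :=
                Finset.sum_congr rfl (fun ε _ => by rw [show h ε = _ from hpart_eq_image V a j ε])
            _ ≤ 9^k' * 2^n * (∑ T ∈ (V.filter (fun S => j ∈ S)).image (fun S => Finset.erase S j),
                  (a (insert j T))^2)^2 := him
            _ = 9^k' * 2^n * A1^2 := by rw [sum_sq_image]
        · intro T hT
          obtain ⟨S, hS, rfl⟩ := Finset.mem_image.mp hT
          intro i hi
          have hiS : i ∈ S := Finset.mem_of_mem_erase hi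
          have hij : i ≠ j := Finset.ne_of_mem_erase hi
          rcases Finset.mem_insert.mp (hV S (Finset.mem_filter.mp hS).1 hiS) with h' | h'
          · exact absurd h' hij
          · exact h'
        · intro T hT
          obtain ⟨S, hS, rfl⟩ := Finset.mem_image.mp hT
          have : (S.erase j).card = S.card - 1 :=
            Finset.card_erase_of_mem (Finset.mem_filter.mp hS).2
          have := hdeg S (Finset.mem_filter.mp hS).1
          omega
      -- Cauchy-Schwarz for the cross term
      have hCS : (∑ ε : Fin n → Bool, (g ε)^2 * (h ε)^2)^2
          ≤ (∑ ε : Fin n → Bool, ((g ε)^2)^2) * (∑ ε : Fin n → Bool, ((h ε)^2)^2) :=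
        Finset.sum_mul_sq_le_sq_mul_sq _ _ _
      have hgh : ∑ ε : Fin n → Bool, (g ε)^2 * (h ε)^2
          ≤ 3^(k'+1) * 3^k' * 2^n * (A0 * A1) := by
        have hlhs_nn : 0 ≤ ∑ ε : Fin n → Bool, (g ε)^2 * (h ε)^2 :=
          Finset.sum_nonneg (fun ε _ => by positivity)
        have hrhs_nn : (0:ℝ) ≤ 3^(k'+1) * 3^k' * 2^n * (A0 * A1) := by positivity
        have hsq : (∑ ε : Fin n → Bool, (g ε)^2 * (h ε)^2)^2
            ≤ (3^(k'+1) * 3^k' * 2^n * (A0 * A1))^2 := by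
          have e4g : ∑ ε : Fin n → Bool, ((g ε)^2)^2 = ∑ ε : Fin n → Bool, (g ε)^4 := by
            exact Finset.sum_congr rfl (fun ε _ => by ring)
          have e4h : ∑ ε : Fin n → Bool, ((h ε)^2)^2 = ∑ ε : Fin n → Bool, (h ε)^4 := by
            exact Finset.sum_congr rfl (fun ε _ => by ring)
          rw [e4g, e4h] at hCS
          calc (∑ ε : Fin n → Bool, (g ε)^2 * (h ε)^2)^2
              ≤ (∑ ε : Fin n → Bool, (g ε)^4) * (∑ ε : Fin n → Bool, (h ε)^4) := by
                rw [← e4g, ← e4h] at hCS ⊢; exact hCS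
            _ ≤ (9^(k'+1) * 2^n * A0^2) * (9^k' * 2^n * A1^2) := by
                apply mul_le_mul hg4 hh4 (Finset.sum_nonneg (fun ε _ => by positivity)) (by positivity)
            _ = (3^(k'+1) * 3^k' * 2^n * (A0 * A1))^2 := by
                have h99 : ∀ m : ℕ, (9:ℝ)^m = 3^m * 3^m := by
                  intro m; rw [← mul_pow]; norm_num
                rw [h99, h99]
                ring
        exact (pow_le_pow_iff_left₀ hlhs_nn hrhs_nn (by norm_num)).mp hsq
      -- assemble
      rw [hmain, ← hAsum]
      have h9th : ∑ ε : Fin n → Bool, (h ε)^4 ≤ 9^(k'+1) * 2^n * A1^2 := by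
        calc ∑ ε : Fin n → Bool, (h ε)^4 ≤ 9^k' * 2^n * A1^2 := hh4
          _ ≤ 9^(k'+1) * 2^n * A1^2 := by
            apply mul_le_mul_of_nonneg_right _ (sq_nonneg A1)
            apply mul_le_mul_of_nonneg_right _ (by positivity)
            exact pow_le_pow_right₀ (by norm_num) (by omega)
      have hcross : 6 * ∑ ε : Fin n → Bool, (g ε)^2 * (h ε)^2
          ≤ 2 * 9^(k'+1) * 2^n * (A0 * A1) := by
        calc 6 * ∑ ε : Fin n → Bool, (g ε)^2 * (h ε)^2
            ≤ 6 * (3^(k'+1) * 3^k' * 2^n * (A0 * A1)) := by linarith [hgh]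
          _ = 2 * 9^(k'+1) * 2^n * (A0 * A1) := by
              have h99 : ∀ m : ℕ, (9:ℝ)^m = 3^m * 3^m := by
                intro m; rw [← mul_pow]; norm_num
              rw [h99, pow_succ]
              ring
      calc ∑ ε : Fin n → Bool, (g ε)^4
            + 6 * ∑ ε : Fin n → Bool, (g ε)^2 * (h ε)^2
            + ∑ ε : Fin n → Bool, (h ε)^4
          ≤ 9^(k'+1) * 2^n * A0^2 + 2 * 9^(k'+1) * 2^n * (A0 * A1) + 9^(k'+1) * 2^n * A1^2 := by
            linarith [hg4, hcross, h9th]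
        _ = 9^(k'+1) * 2^n * (A0 + A1)^2 := by ring


/-- lower bound on the L1 norm of a low-degree multilinear polynomial -/
theorem l1_lower (k : ℕ) (V : Finset (Finset (Fin n))) (a : Finset (Fin n) → ℝ)
    (hdeg : ∀ S ∈ V, S.card ≤ k) :
    2^n * Real.sqrt (∑ S ∈ V, (a S)^2)
      ≤ 3^k * ∑ ε : Fin n → Bool, |∑ S ∈ V, a S * chi ε S| := by
  set A := ∑ S ∈ V, (a S)^2 with hA
  have hAnn : 0 ≤ A := Finset.sum_nonneg (fun S _ => sq_nonneg _)
  set f : (Fin n → Bool) → ℝ := fun ε => ∑ S ∈ V, a S * chi ε S with hf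
  set L1 := ∑ ε : Fin n → Bool, |f ε| with hL1
  have hL1nn : 0 ≤ L1 := Finset.sum_nonneg (fun ε _ => abs_nonneg _)
  have hP : ∑ ε : Fin n → Bool, (f ε)^2 = 2^n * A :=
    parseval Finset.univ V a (fun S _ => Finset.subset_univ S)
  have hH : ∑ ε : Fin n → Bool, (f ε)^4 ≤ 9^k * 2^n * A^2 :=
    hyper Finset.univ k V a (fun S _ => Finset.subset_univ S) hdeg
  rcases eq_or_lt_of_le hAnn with hA0 | hApos
  · rw [← hA0, Real.sqrt_zero, mul_zero]
    positivity
  · -- Cauchy-Schwarz twice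
    have hCS1 : (∑ ε : Fin n → Bool, (f ε)^2)^2
        ≤ L1 * ∑ ε : Fin n → Bool, |f ε|^3 := by
      have := Finset.sum_mul_sq_le_sq_mul_sq Finset.univ
        (fun ε => Real.sqrt |f ε|) (fun ε => |f ε| * Real.sqrt |f ε|)
      have e1 : ∀ ε : Fin n → Bool,
          Real.sqrt |f ε| * (|f ε| * Real.sqrt |f ε|) = (f ε)^2 := by
        intro ε
        rw [show Real.sqrt |f ε| * (|f ε| * Real.sqrt |f ε|)
            = (Real.sqrt |f ε| * Real.sqrt |f ε|) * |f ε| by ring,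
          Real.mul_self_sqrt (abs_nonneg _), ← abs_mul, abs_mul_self]
        ring
      have e2 : ∀ ε : Fin n → Bool, (Real.sqrt |f ε|)^2 = |f ε| :=
        fun ε => Real.sq_sqrt (abs_nonneg _)
      have e3 : ∀ ε : Fin n → Bool, (|f ε| * Real.sqrt |f ε|)^2 = |f ε|^3 := by
        intro ε
        rw [mul_pow, Real.sq_sqrt (abs_nonneg _)]
        ring
      calc (∑ ε : Fin n → Bool, (f ε)^2)^2
          = (∑ ε : Fin n → Bool, Real.sqrt |f ε| * (|f ε| * Real.sqrt |f ε|))^2 := by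
            congr 1; exact Finset.sum_congr rfl (fun ε _ => (e1 ε).symm)
        _ ≤ (∑ ε : Fin n → Bool, (Real.sqrt |f ε|)^2)
            * ∑ ε : Fin n → Bool, (|f ε| * Real.sqrt |f ε|)^2 := this
        _ = L1 * ∑ ε : Fin n → Bool, |f ε|^3 := by
            rw [hL1]
            congr 1
            · exact Finset.sum_congr rfl (fun ε _ => e2 ε)
            · exact Finset.sum_congr rfl (fun ε _ => e3 ε)
    have hCS2 : (∑ ε : Fin n → Bool, |f ε|^3)^2
        ≤ (∑ ε : Fin n → Bool, (f ε)^2) * ∑ ε : Fin n → Bool, (f ε)^4 := by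
      have := Finset.sum_mul_sq_le_sq_mul_sq Finset.univ
        (fun ε => |f ε|) (fun ε => (f ε)^2)
      have e1 : ∀ ε : Fin n → Bool, |f ε| * (f ε)^2 = |f ε|^3 := by
        intro ε
        rw [← sq_abs (f ε)]
        ring
      have e2 : ∀ ε : Fin n → Bool, |f ε|^2 = (f ε)^2 := fun ε => sq_abs _
      have e3 : ∀ ε : Fin n → Bool, ((f ε)^2)^2 = (f ε)^4 := fun ε => by ring
      calc (∑ ε : Fin n → Bool, |f ε|^3)^2
          = (∑ ε : Fin n → Bool, |f ε| * (f ε)^2)^2 := by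
            congr 1; exact Finset.sum_congr rfl (fun ε _ => (e1 ε).symm)
        _ ≤ (∑ ε : Fin n → Bool, |f ε|^2) * ∑ ε : Fin n → Bool, ((f ε)^2)^2 := this
        _ = (∑ ε : Fin n → Bool, (f ε)^2) * ∑ ε : Fin n → Bool, (f ε)^4 := by
            congr 1
            · exact Finset.sum_congr rfl (fun ε _ => e2 ε)
            · exact Finset.sum_congr rfl (fun ε _ => e3 ε)
    -- combine: (2^n A)^3 ≤ L1^2 * 9^k * 2^n * A^2
    set F2 := ∑ ε : Fin n → Bool, (f ε)^2
    set F4 := ∑ ε : Fin n → Bool, (f ε)^4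
    set L3 := ∑ ε : Fin n → Bool, |f ε|^3
    have hF2pos : 0 < F2 := by rw [hP]; positivity
    have hF4nn : 0 ≤ F4 := Finset.sum_nonneg (fun ε _ => by positivity)
    have hL3nn : 0 ≤ L3 := Finset.sum_nonneg (fun ε _ => by positivity)
    have hkey : F2^3 ≤ L1^2 * F4 := by
      have h4 : F2^4 ≤ L1^2 * (F2 * F4) := by
        calc F2^4 = (F2^2)^2 := by ring
          _ ≤ (L1 * L3)^2 := by
            apply pow_le_pow_left₀ (sq_nonneg _) hCS1
          _ = L1^2 * L3^2 := by ring
          _ ≤ L1^2 * (F2 * F4) := by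
            apply mul_le_mul_of_nonneg_left hCS2 (sq_nonneg _)
      have := mul_le_mul_of_nonneg_left h4 (le_of_lt (inv_pos.mpr hF2pos))
      calc F2^3 = F2⁻¹ * F2^4 := by field_simp
        _ ≤ F2⁻¹ * (L1^2 * (F2 * F4)) := this
        _ = L1^2 * F4 := by field_simp
    -- conclude
    have hsq : (2^n * Real.sqrt A)^2 ≤ (3^k * L1)^2 := by
      have hA2 : (2^n * Real.sqrt A)^2 = 2^(2*n) * A := by
        rw [mul_pow, Real.sq_sqrt hAnn, ← pow_mul, Nat.mul_comm n 2]
      rw [hA2]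
      have h1 : F2^3 = 2^(3*n) * A^3 := by
        rw [hP, mul_pow, ← pow_mul, Nat.mul_comm n 3]
      have h2 : L1^2 * F4 ≤ L1^2 * (9^k * 2^n * A^2) :=
        mul_le_mul_of_nonneg_left hH (sq_nonneg _)
      have h3 : 2^(3*n) * A^3 ≤ L1^2 * (9^k * 2^n * A^2) := by
        rw [← h1]; exact le_trans hkey h2
      -- divide by 2^n * A^2 > 0
      have hpos : (0:ℝ) < 2^n * A^2 := by positivity
      rw [show (3:ℝ)^k * L1 = L1 * 3^k by ring, mul_pow]
      have h9 : ((3:ℝ)^k)^2 = 9^k := by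
        rw [← pow_mul, show k*2 = 2*k by ring, pow_mul]
        norm_num
      rw [h9]
      refine (mul_le_mul_iff_of_pos_right hpos).mp ?_
      calc 2^(2*n) * A * (2^n * A^2) = 2^(3*n) * A^3 := by
            have e : (2:ℝ)^(3*n) = 2^(2*n) * 2^n := by
              rw [← pow_add]; congr 1; omega
            rw [e]; ring
        _ ≤ L1^2 * (9^k * 2^n * A^2) := h3
        _ = L1^2 * 9^k * (2^n * A^2) := by ring
    have hlhs : 0 ≤ 2^n * Real.sqrt A := by positivity
    have hrhs : 0 ≤ 3^k * L1 := by positivity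
    exact (pow_le_pow_iff_left₀ hlhs hrhs (by norm_num)).mp hsq

/-- a multilinear polynomial on [-1,1]^n is bounded by its max over the cube -/
theorem multilinear_bound (U : Finset (Finset (Fin n))) (h : Finset (Fin n) → ℝ) (M : ℝ)
    (hM : ∀ ε : Fin n → Bool, |∑ S ∈ U, h S * ∏ i ∈ S, sgn ε i| ≤ M) :
    ∀ (P : Finset (Fin n)) (z : Fin n → ℝ), (∀ i, |z i| ≤ 1) →
      (∀ i, i ∉ P → z i = 1 ∨ z i = -1) →
      |∑ S ∈ U, h S * ∏ i ∈ S, z i| ≤ M := by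
  intro P
  induction P using Finset.induction_on with
  | empty =>
    intro z _ hcube
    set ε : Fin n → Bool := fun i => decide (z i = 1) with hε
    have : ∀ i, sgn ε i = z i := by
      intro i
      rcases hcube i (Finset.notMem_empty i) with h1 | h1
      · simp [sgn, hε, h1]
      · have hne : z i ≠ 1 := by rw [h1]; norm_num
        have hf : ε i = false := by simp [hε, hne]
        simp [sgn, hf, h1]
    have e : ∑ S ∈ U, h S * ∏ i ∈ S, z i = ∑ S ∈ U, h S * ∏ i ∈ S, sgn ε i := by
      refine Finset.sum_congr rfl (fun S _ => ?_)
      congr 1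
      exact Finset.prod_congr rfl (fun i _ => (this i).symm)
    rw [e]
    exact hM ε
  | @insert j P hjP ih =>
    intro z hz1 hcube
    -- affine decomposition in coordinate j
    have key : ∑ S ∈ U, h S * ∏ i ∈ S, z i
        = (1 + z j)/2 * (∑ S ∈ U, h S * ∏ i ∈ S, (Function.update z j 1) i)
          + (1 - z j)/2 * (∑ S ∈ U, h S * ∏ i ∈ S, (Function.update z j (-1)) i) := by
      rw [Finset.mul_sum, Finset.mul_sum, ← Finset.sum_add_distrib]
      refine Finset.sum_congr rfl (fun S _ => ?_)
      by_cases hjS : j ∈ S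
      · have e : ∀ a : ℝ, ∏ i ∈ S, (Function.update z j a) i
            = a * ∏ i ∈ S.erase j, z i := by
          intro a
          rw [← Finset.mul_prod_erase S _ hjS, Function.update_self]
          congr 1
          exact Finset.prod_congr rfl
            (fun i hi => Function.update_of_ne (Finset.ne_of_mem_erase hi) _ _)
        have e0 : ∏ i ∈ S, z i = z j * ∏ i ∈ S.erase j, z i :=
          (Finset.mul_prod_erase S _ hjS).symm
        rw [e 1, e (-1), e0]
        ring
      · have e : ∀ a : ℝ, ∏ i ∈ S, (Function.update z j a) i = ∏ i ∈ S, z i := by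
          intro a
          exact Finset.prod_congr rfl
            (fun i hi => Function.update_of_ne (fun hij => hjS (by rwa [hij] at hi)) _ _)
        rw [e 1, e (-1)]
        ring
    have hw1 : 0 ≤ (1 + z j)/2 := by
      have := abs_le.mp (hz1 j); linarith [this.1]
    have hw2 : 0 ≤ (1 - z j)/2 := by
      have := abs_le.mp (hz1 j); linarith [this.2]
    have hupdate : ∀ a : ℝ, |a| ≤ 1 → a = 1 ∨ a = -1 →
        |∑ S ∈ U, h S * ∏ i ∈ S, (Function.update z j a) i| ≤ M := by
      intro a ha hacube
      apply ih
      · intro i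
        by_cases hij : i = j
        · subst hij; rw [Function.update_self]; exact ha
        · rw [Function.update_of_ne hij]; exact hz1 i
      · intro i hiP
        by_cases hij : i = j
        · subst hij; rw [Function.update_self]; exact hacube
        · rw [Function.update_of_ne hij]
          apply hcube
          intro hmem
          rcases Finset.mem_insert.mp hmem with h' | h'
          · exact hij h'
          · exact hiP h'
    have hb1 := hupdate 1 (by norm_num) (Or.inl rfl)
    have hb2 := hupdate (-1) (by norm_num) (Or.inr rfl)
    rw [key]
    calc |(1 + z j)/2 * (∑ S ∈ U, h S * ∏ i ∈ S, (Function.update z j 1) i)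
          + (1 - z j)/2 * (∑ S ∈ U, h S * ∏ i ∈ S, (Function.update z j (-1)) i)|
        ≤ |(1 + z j)/2 * (∑ S ∈ U, h S * ∏ i ∈ S, (Function.update z j 1) i)|
          + |(1 - z j)/2 * (∑ S ∈ U, h S * ∏ i ∈ S, (Function.update z j (-1)) i)| :=
          abs_add_le _ _
      _ = (1 + z j)/2 * |∑ S ∈ U, h S * ∏ i ∈ S, (Function.update z j 1) i|
          + (1 - z j)/2 * |∑ S ∈ U, h S * ∏ i ∈ S, (Function.update z j (-1)) i| := by
          rw [abs_mul, abs_mul, abs_of_nonneg hw1, abs_of_nonneg hw2]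
      _ ≤ (1 + z j)/2 * M + (1 - z j)/2 * M :=
          add_le_add (mul_le_mul_of_nonneg_left hb1 hw1) (mul_le_mul_of_nonneg_left hb2 hw2)
      _ = M := by ring


section Trig

lemma pascal_sum (j : ℕ) (y : ℕ → ℝ) :
    ∑ m ∈ Finset.range (j+2), (Nat.choose (j+1) m : ℝ) * y m
      = ∑ m ∈ Finset.range (j+1), (Nat.choose j m : ℝ) * (y m + y (m+1)) := by
  have h2 : ∑ m ∈ Finset.range (j+2), (Nat.choose j m : ℝ) * y m
      = ∑ m ∈ Finset.range (j+1), (Nat.choose j (m+1) : ℝ) * y (m+1)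
        + (Nat.choose j 0 : ℝ) * y 0 :=
    Finset.sum_range_succ' (fun m => (Nat.choose j m : ℝ) * y m) (j+1)
  have h3 : ∑ m ∈ Finset.range (j+2), (Nat.choose j m : ℝ) * y m
      = ∑ m ∈ Finset.range (j+1), (Nat.choose j m : ℝ) * y m := by
    rw [Finset.sum_range_succ]
    simp [Nat.choose_succ_self]
  calc ∑ m ∈ Finset.range (j+2), (Nat.choose (j+1) m : ℝ) * y m
      = ∑ m ∈ Finset.range (j+1), (Nat.choose (j+1) (m+1) : ℝ) * y (m+1)
        + (Nat.choose (j+1) 0 : ℝ) * y 0 :=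
        Finset.sum_range_succ' _ (j+1)
    _ = ∑ m ∈ Finset.range (j+1), ((Nat.choose j m : ℝ) * y (m+1)
          + (Nat.choose j (m+1) : ℝ) * y (m+1)) + y 0 := by
        simp only [Nat.choose_succ_succ, Nat.cast_add, Nat.choose_zero_right,
          Nat.cast_one, one_mul]
        congr 1
        exact Finset.sum_congr rfl (fun m _ => by ring)
    _ = ∑ m ∈ Finset.range (j+1), (Nat.choose j m : ℝ) * y (m+1)
        + (∑ m ∈ Finset.range (j+1), (Nat.choose j (m+1) : ℝ) * y (m+1)
          + (Nat.choose j 0 : ℝ) * y 0) := by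
        rw [Finset.sum_add_distrib]
        simp only [Nat.choose_zero_right, Nat.cast_one, one_mul]
        ring
    _ = ∑ m ∈ Finset.range (j+1), (Nat.choose j m : ℝ) * y (m+1)
        + ∑ m ∈ Finset.range (j+1), (Nat.choose j m : ℝ) * y m := by
        rw [← h2, h3]
    _ = ∑ m ∈ Finset.range (j+1), (Nat.choose j m : ℝ) * (y m + y (m+1)) := by
        rw [← Finset.sum_add_distrib]
        exact Finset.sum_congr rfl (fun m _ => by ring)

/-- binomial variance identity -/
lemma bino (j : ℕ) :
    ∑ m ∈ Finset.range (j+1), (Nat.choose j m : ℝ) * ((j:ℝ) - 2*m)^2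
      = (j:ℝ) * 2^j := by
  induction j with
  | zero => simp
  | succ j ih =>
    have := pascal_sum j (fun m => ((j:ℝ)+1 - 2*m)^2)
    have e : ∀ m : ℕ, ((j:ℝ)+1 - 2*m)^2 + ((j:ℝ)+1 - 2*(m+1))^2
        = 2*((j:ℝ) - 2*m)^2 + 2 := by intro m; ring
    calc ∑ m ∈ Finset.range (j+1+1), (Nat.choose (j+1) m : ℝ) * (((j+1:ℕ):ℝ) - 2*m)^2
        = ∑ m ∈ Finset.range (j+2), (Nat.choose (j+1) m : ℝ) * (((j:ℝ)+1) - 2*m)^2 := by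
          exact Finset.sum_congr rfl (fun m _ => by push_cast; ring_nf)
      _ = ∑ m ∈ Finset.range (j+1), (Nat.choose j m : ℝ)
            * ((((j:ℝ)+1) - 2*m)^2 + (((j:ℝ)+1) - 2*(m+1:ℕ))^2) := this
      _ = ∑ m ∈ Finset.range (j+1), (Nat.choose j m : ℝ) * (2*((j:ℝ) - 2*m)^2 + 2) := by
          exact Finset.sum_congr rfl (fun m _ => by push_cast; ring_nf)
      _ = 2 * (∑ m ∈ Finset.range (j+1), (Nat.choose j m : ℝ) * ((j:ℝ) - 2*m)^2)
            + 2 * ∑ m ∈ Finset.range (j+1), (Nat.choose j m : ℝ) := by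
          rw [Finset.mul_sum, Finset.mul_sum, ← Finset.sum_add_distrib]
          exact Finset.sum_congr rfl (fun m _ => by ring)
      _ = 2 * ((j:ℝ) * 2^j) + 2 * 2^j := by
          rw [ih]
          congr 2
          have := Nat.sum_range_choose j
          have : ∑ m ∈ Finset.range (j+1), (Nat.choose j m : ℝ)
              = ((∑ m ∈ Finset.range (j+1), Nat.choose j m : ℕ) : ℝ) := by push_cast; ring
          rw [this, Nat.sum_range_choose]
          push_cast; ring
      _ = ((j+1:ℕ):ℝ) * 2^(j+1) := by push_cast; ring

/-- expansion of cos^j into cosines of multiples -/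
lemma cospow (j : ℕ) (θ : ℝ) :
    Real.cos θ ^ j * 2^j
      = ∑ m ∈ Finset.range (j+1), (Nat.choose j m : ℝ)
          * Real.cos (((j:ℝ) - 2*m) * θ) := by
  induction j with
  | zero => simp
  | succ j ih =>
    have key : ∀ m : ℕ, 2 * Real.cos θ * Real.cos (((j:ℝ) - 2*m) * θ)
        = Real.cos ((((j+1:ℕ):ℝ) - 2*m) * θ)
          + Real.cos ((((j+1:ℕ):ℝ) - 2*(m+1:ℕ)) * θ) := by
      intro m
      rw [show ((((j+1:ℕ):ℝ) - 2*m) * θ) = ((j:ℝ) - 2*m) * θ + θ by push_cast; ring]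
      rw [show ((((j+1:ℕ):ℝ) - 2*(m+1:ℕ)) * θ) = ((j:ℝ) - 2*m) * θ - θ by push_cast; ring]
      rw [Real.cos_add, Real.cos_sub]
      ring
    calc Real.cos θ ^ (j+1) * 2^(j+1)
        = (Real.cos θ ^ j * 2^j) * (2 * Real.cos θ) := by ring
      _ = ∑ m ∈ Finset.range (j+1), (Nat.choose j m : ℝ)
            * (2 * Real.cos θ * Real.cos (((j:ℝ) - 2*m) * θ)) := by
          rw [ih, Finset.sum_mul]
          exact Finset.sum_congr rfl (fun m _ => by ring)
      _ = ∑ m ∈ Finset.range (j+1), (Nat.choose j m : ℝ)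
            * (Real.cos ((((j+1:ℕ):ℝ) - 2*m) * θ)
              + Real.cos ((((j+1:ℕ):ℝ) - 2*(m+1:ℕ)) * θ)) := by
          exact Finset.sum_congr rfl (fun m _ => by rw [key m])
      _ = ∑ m ∈ Finset.range (j+2), (Nat.choose (j+1) m : ℝ)
            * Real.cos ((((j+1:ℕ):ℝ) - 2*m) * θ) := by
          rw [pascal_sum j (fun m => Real.cos ((((j+1:ℕ):ℝ) - 2*m) * θ))]

end Trig


section Integrals

open Real intervalIntegral

lemma int_cos_multiple (z : ℤ) :
    ∫ θ in (0:ℝ)..π, Real.cos ((z:ℝ) * θ) = if z = 0 then π else 0 := by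
  by_cases hz : z = 0
  · subst hz
    simp [Real.pi_pos.le]
  · have hz' : ((z:ℝ)) ≠ 0 := Int.cast_ne_zero.mpr hz
    rw [if_neg hz]
    rw [integral_comp_mul_left Real.cos hz']
    simp [integral_cos, Real.sin_int_mul_pi]

lemma contK (c : ℝ) : Continuous (fun θ : ℝ => Real.cos (c * θ)) := by fun_prop

lemma int_coscos (z w : ℤ) :
    ∫ θ in (0:ℝ)..π, Real.cos ((z:ℝ)*θ) * Real.cos ((w:ℝ)*θ)
      = ((if z+w = 0 then π else 0) + (if z-w = 0 then π else 0))/2 := by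
  have e : ∀ θ:ℝ, Real.cos ((z:ℝ)*θ) * Real.cos ((w:ℝ)*θ)
      = (Real.cos (((z+w:ℤ):ℝ)*θ) + Real.cos (((z-w:ℤ):ℝ)*θ))/2 := by
    intro θ
    rw [show (((z+w:ℤ):ℝ))*θ = (z:ℝ)*θ + (w:ℝ)*θ by push_cast; ring,
      show (((z-w:ℤ):ℝ))*θ = (z:ℝ)*θ - (w:ℝ)*θ by push_cast; ring,
      Real.cos_add, Real.cos_sub]
    ring
  simp only [e]
  rw [integral_div,
    integral_add ((contK _).intervalIntegrable _ _)
      ((contK _).intervalIntegrable _ _),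
    int_cos_multiple, int_cos_multiple]

/-- the kernel -/
noncomputable def Kf (d : ℕ) : ℝ → ℝ :=
  fun θ => ∑ k ∈ Finset.Icc 1 d, (k:ℝ)^2 * Real.cos ((k:ℝ)*θ)

lemma Kf_cont (d : ℕ) : Continuous (Kf d) := by
  unfold Kf
  exact continuous_finset_sum _ (fun k _ => by fun_prop)

lemma int_cosK (d : ℕ) (z : ℤ) (hz : z.natAbs ≤ d) :
    ∫ θ in (0:ℝ)..π, Real.cos ((z:ℝ)*θ) * Kf d θ = π/2 * (z:ℝ)^2 := by
  have e : ∀ θ:ℝ, Real.cos ((z:ℝ)*θ) * Kf d θ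
      = ∑ k ∈ Finset.Icc 1 d, (k:ℝ)^2 * (Real.cos ((z:ℝ)*θ) * Real.cos ((k:ℝ)*θ)) := by
    intro θ
    unfold Kf
    rw [Finset.mul_sum]
    exact Finset.sum_congr rfl (fun k _ => by ring)
  simp only [e]
  rw [integral_finset_sum
    (fun k _ => (Continuous.intervalIntegrable (by fun_prop) _ _))]
  have e2 : ∀ k ∈ Finset.Icc 1 d,
      ∫ θ in (0:ℝ)..π, (k:ℝ)^2 * (Real.cos ((z:ℝ)*θ) * Real.cos ((k:ℝ)*θ))
      = if k = z.natAbs then (k:ℝ)^2 * π / 2 else 0 := by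
    intro k hk
    obtain ⟨hk1, hk2⟩ := Finset.mem_Icc.mp hk
    rw [integral_const_mul]
    have hcast : ∀ θ:ℝ, Real.cos ((k:ℝ)*θ) = Real.cos ((((k:ℕ):ℤ):ℝ)*θ) := by
      intro θ; norm_num
    simp only [hcast]
    rw [int_coscos z (k:ℤ)]
    split_ifs <;> first | ring1 | (exfalso; omega)
  rw [Finset.sum_congr rfl e2]
  by_cases hz0 : z = 0
  · subst hz0
    have : ∀ k ∈ Finset.Icc 1 d, (if k = (0:ℤ).natAbs then (k:ℝ)^2 * π / 2 else 0) = 0 := by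
      intro k hk
      obtain ⟨hk1, _⟩ := Finset.mem_Icc.mp hk
      have : k ≠ (0:ℤ).natAbs := by simp; omega
      rw [if_neg this]
    rw [Finset.sum_congr rfl this]
    simp
  · have hmem : z.natAbs ∈ Finset.Icc 1 d := by
      rw [Finset.mem_Icc]
      constructor
      · omega
      · exact hz
    rw [Finset.sum_ite_eq' (Finset.Icc 1 d) z.natAbs (fun k => (k:ℝ)^2 * π / 2)]
    rw [if_pos hmem]
    have : ((z.natAbs : ℕ) : ℝ) = |(z:ℝ)| := by
      rw [Nat.cast_natAbs, Int.cast_abs]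
    rw [this, sq_abs]
    ring

lemma int_monoK (d j : ℕ) (hj : j ≤ d) :
    ∫ θ in (0:ℝ)..π, (Real.cos θ)^j * Kf d θ = π/2 * j := by
  have e : ∀ θ:ℝ, (Real.cos θ)^j * Kf d θ
      = (∑ m ∈ Finset.range (j+1), (Nat.choose j m : ℝ)
          * (Real.cos (((j:ℝ) - 2*m) * θ) * Kf d θ))/2^j := by
    intro θ
    have hc := cospow j θ
    have h2 : (Real.cos θ)^j
        = (∑ m ∈ Finset.range (j+1), (Nat.choose j m : ℝ)
            * Real.cos (((j:ℝ) - 2*m) * θ))/2^j := by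
      rw [← hc]
      field_simp
    rw [h2, Finset.sum_div, Finset.sum_mul, Finset.sum_div]
    exact Finset.sum_congr rfl (fun m _ => by ring)
  simp only [e]
  rw [integral_div]
  rw [integral_finset_sum
    (fun m _ => (Continuous.intervalIntegrable (by exact continuous_const.mul ((contK _).mul (Kf_cont d))) _ _))]
  have e2 : ∀ m ∈ Finset.range (j+1),
      ∫ θ in (0:ℝ)..π, (Nat.choose j m : ℝ) * (Real.cos (((j:ℝ) - 2*m) * θ) * Kf d θ)
      = (Nat.choose j m : ℝ) * (π/2 * ((j:ℝ) - 2*m)^2) := by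
    intro m hm
    have hm' : m ≤ j := Nat.lt_succ_iff.mp (Finset.mem_range.mp hm)
    rw [integral_const_mul]
    congr 1
    have hcast : ∀ θ:ℝ, Real.cos (((j:ℝ) - 2*m) * θ)
        = Real.cos (((((j:ℤ) - 2*m):ℤ):ℝ) * θ) := by
      intro θ; congr 1; push_cast; ring
    simp only [hcast]
    rw [int_cosK d ((j:ℤ) - 2*m) (by omega)]
    congr 1
    push_cast; ring
  rw [Finset.sum_congr rfl e2]
  have e3 : ∑ m ∈ Finset.range (j+1), (Nat.choose j m : ℝ) * (π/2 * ((j:ℝ) - 2*m)^2)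
      = π/2 * ((j:ℝ) * 2^j) := by
    rw [← bino j, Finset.mul_sum]
    exact Finset.sum_congr rfl (fun m _ => by ring)
  rw [e3]
  field_simp

lemma int_CS (f g : ℝ → ℝ) (hf : Continuous f) (hg : Continuous g) :
    (∫ θ in (0:ℝ)..π, f θ * g θ)^2
      ≤ (∫ θ in (0:ℝ)..π, (f θ)^2) * (∫ θ in (0:ℝ)..π, (g θ)^2) := by
  set a := ∫ θ in (0:ℝ)..π, (f θ)^2 with ha
  set b := ∫ θ in (0:ℝ)..π, f θ * g θ with hb
  set c := ∫ θ in (0:ℝ)..π, (g θ)^2 with hc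
  have quad : ∀ t:ℝ, 0 ≤ a*(t*t) + (2*b)*t + c := by
    intro t
    have h0 : 0 ≤ ∫ θ in (0:ℝ)..π, (t*f θ + g θ)^2 :=
      intervalIntegral.integral_nonneg Real.pi_pos.le (fun θ _ => sq_nonneg _)
    have expand : ∫ θ in (0:ℝ)..π, (t*f θ + g θ)^2
        = a*(t*t) + (2*b)*t + c := by
      have e : ∀ θ:ℝ, (t*f θ + g θ)^2
          = t^2*(f θ)^2 + (2*t)*(f θ*g θ) + (g θ)^2 := by intro θ; ring
      simp only [e]
      rw [integral_add (Continuous.intervalIntegrable (by fun_prop) _ _)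
          (Continuous.intervalIntegrable (by fun_prop) _ _),
        integral_add (Continuous.intervalIntegrable (by fun_prop) _ _)
          (Continuous.intervalIntegrable (by fun_prop) _ _)]
      rw [integral_const_mul (t^2) (fun θ => (f θ)^2),
        integral_const_mul (2*t) (fun θ => f θ * g θ)]
      rw [← ha, ← hb, ← hc]
      ring
    linarith [expand ▸ h0]
  have hd := discrim_le_zero quad
  rw [discrim] at hd
  nlinarith [hd]

end Integrals

open Real in
/-- Bound on the weighted coefficient sum (the derivative at 1) of a polynomial
bounded on [-1,1]. -/
lemma polyBound {ι : Type*} (F : Finset ι) (c : ι → ℝ) (e : ι → ℕ) (d : ℕ) (hd : 2 ≤ d)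
    (he : ∀ i ∈ F, e i ≤ d) (M : ℝ) (hM : 0 ≤ M)
    (hQ : ∀ t : ℝ, |t| ≤ 1 → |∑ i ∈ F, c i * t^(e i)| ≤ M) :
    |∑ i ∈ F, c i * (e i : ℝ)| ≤ 2^((3:ℝ)/2) * ((d:ℝ)-1)^((3:ℝ)/2) * (d:ℝ) * M := by
  by_cases hd2 : d = 2
  · -- quadratic case via interpolation at -1, 0, 1
    subst hd2
    have key : ∑ i ∈ F, c i * (e i : ℝ)
        = (3/2) * (∑ i ∈ F, c i * (1:ℝ)^(e i))
          + (1/2) * (∑ i ∈ F, c i * (-1:ℝ)^(e i))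
          - 2 * (∑ i ∈ F, c i * (0:ℝ)^(e i)) := by
      rw [Finset.mul_sum, Finset.mul_sum, Finset.mul_sum, ← Finset.sum_add_distrib,
        ← Finset.sum_sub_distrib]
      refine Finset.sum_congr rfl (fun i hi => ?_)
      have h2 : e i ≤ 2 := he i hi
      have : e i = 0 ∨ e i = 1 ∨ e i = 2 := by omega
      rcases this with h | h | h <;> rw [h] <;> norm_num <;> ring
    have hb1 := hQ 1 (by norm_num)
    have hb2 := hQ (-1) (by norm_num)
    have hb3 := hQ 0 (by norm_num)
    have habs : |∑ i ∈ F, c i * (e i : ℝ)| ≤ 4 * M := by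
      rw [key]
      have t1 := abs_le.mp hb1
      have t2 := abs_le.mp hb2
      have t3 := abs_le.mp hb3
      rw [abs_le]
      constructor <;> nlinarith [t1.1, t1.2, t2.1, t2.2, t3.1, t3.2]
    rw [show ((2:ℕ):ℝ) - 1 = 1 by norm_num, Real.one_rpow]
    have h2 : (2:ℝ) ≤ 2^((3:ℝ)/2) := by
      calc (2:ℝ) = 2^((1:ℝ)) := (Real.rpow_one 2).symm
        _ ≤ 2^((3:ℝ)/2) := Real.rpow_le_rpow_of_exponent_le one_le_two (by norm_num)
    calc |∑ i ∈ F, c i * (e i : ℝ)| ≤ 4 * M := habs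
      _ ≤ 2^((3:ℝ)/2) * 1 * (2:ℕ) * M := by
          push_cast
          nlinarith [h2, hM]
  · -- d ≥ 3 : use the integral kernel
    have hd3 : 3 ≤ d := by omega
    set D := ∑ i ∈ F, c i * (e i : ℝ) with hD
    set Sig4 := ∑ k ∈ Finset.Icc 1 d, (k:ℝ)^4 with hSig4
    have hSignn : 0 ≤ Sig4 := Finset.sum_nonneg (fun k _ => by positivity)
    have contQ : Continuous (fun θ : ℝ => ∑ i ∈ F, c i * (Real.cos θ)^(e i)) :=
      continuous_finset_sum _ (fun i _ => by fun_prop)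
    -- the main integral
    have hQK : ∫ θ in (0:ℝ)..π, (∑ i ∈ F, c i * (Real.cos θ)^(e i)) * Kf d θ
        = π/2 * D := by
      have e1 : ∀ θ:ℝ, (∑ i ∈ F, c i * (Real.cos θ)^(e i)) * Kf d θ
          = ∑ i ∈ F, c i * ((Real.cos θ)^(e i) * Kf d θ) := by
        intro θ
        rw [Finset.sum_mul]
        exact Finset.sum_congr rfl (fun i _ => by ring)
      simp only [e1]
      rw [intervalIntegral.integral_finset_sum
        (fun i _ => (Continuous.intervalIntegrable
          (by exact continuous_const.mul ((Real.continuous_cos.pow _).mul (Kf_cont d))) _ _))]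
      have e2 : ∀ i ∈ F, ∫ θ in (0:ℝ)..π, c i * ((Real.cos θ)^(e i) * Kf d θ)
          = c i * (π/2 * (e i : ℝ)) := by
        intro i hi
        rw [intervalIntegral.integral_const_mul, int_monoK d (e i) (he i hi)]
      rw [Finset.sum_congr rfl e2, hD, Finset.mul_sum]
      exact Finset.sum_congr rfl (fun i _ => by ring)
    -- the second moment of Q
    have hQ2 : ∫ θ in (0:ℝ)..π, (∑ i ∈ F, c i * (Real.cos θ)^(e i))^2 ≤ π * M^2 := by
      have hmono := intervalIntegral.integral_mono_on (μ := MeasureTheory.volume) (a := (0:ℝ)) (b := π)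
        (f := fun θ => (∑ i ∈ F, c i * (Real.cos θ)^(e i))^2) (g := fun _ => M^2)
        Real.pi_pos.le
        ((contQ.pow 2).intervalIntegrable _ _)
        (Continuous.intervalIntegrable continuous_const _ _)
        (fun θ _ => by
          have h' := abs_le.mp (hQ (Real.cos θ) (Real.abs_cos_le_one θ))
          show (∑ i ∈ F, c i * (Real.cos θ)^(e i))^2 ≤ M^2
          nlinarith [h'.1, h'.2])
      calc ∫ θ in (0:ℝ)..π, (∑ i ∈ F, c i * (Real.cos θ)^(e i))^2
          ≤ ∫ _ in (0:ℝ)..π, M^2 := hmono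
        _ = π * M^2 := by
            rw [intervalIntegral.integral_const, smul_eq_mul]
            ring
    -- the second moment of K
    have hK2 : ∫ θ in (0:ℝ)..π, (Kf d θ)^2 = π/2 * Sig4 := by
      have e1 : ∀ θ:ℝ, (Kf d θ)^2
          = ∑ k ∈ Finset.Icc 1 d, (k:ℝ)^2 * (Real.cos ((k:ℝ)*θ) * Kf d θ) := by
        intro θ
        calc (Kf d θ)^2 = Kf d θ * Kf d θ := sq (Kf d θ) ▸ rfl
          _ = ∑ k ∈ Finset.Icc 1 d, (k:ℝ)^2 * (Real.cos ((k:ℝ)*θ) * Kf d θ) := by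
              nth_rewrite 1 [Kf]
              rw [Finset.sum_mul]
              exact Finset.sum_congr rfl (fun k _ => by ring)
      simp only [e1]
      rw [intervalIntegral.integral_finset_sum
        (fun k _ => (Continuous.intervalIntegrable
          (by exact continuous_const.mul ((contK _).mul (Kf_cont d))) _ _))]
      have e2 : ∀ k ∈ Finset.Icc 1 d,
          ∫ θ in (0:ℝ)..π, (k:ℝ)^2 * (Real.cos ((k:ℝ)*θ) * Kf d θ)
          = (k:ℝ)^2 * (π/2 * (k:ℝ)^2) := by
        intro k hk
        obtain ⟨hk1, hk2⟩ := Finset.mem_Icc.mp hk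
        rw [intervalIntegral.integral_const_mul]
        have hcast : ∀ θ:ℝ, Real.cos ((k:ℝ)*θ) = Real.cos ((((k:ℕ):ℤ):ℝ)*θ) := by
          intro θ; norm_num
        simp only [hcast]
        rw [int_cosK d (k:ℤ) (by omega)]
        norm_num
      rw [Finset.sum_congr rfl e2, hSig4, Finset.mul_sum]
      exact Finset.sum_congr rfl (fun k _ => by ring)
    -- Cauchy-Schwarz
    have hCS := int_CS (fun θ => ∑ i ∈ F, c i * (Real.cos θ)^(e i)) (Kf d) contQ (Kf_cont d)
    rw [hQK, hK2] at hCS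
    have hDsq : D^2 ≤ 2 * M^2 * Sig4 := by
      have hchain : (π/2 * D)^2 ≤ (π * M^2) * (π/2 * Sig4) := by
        calc (π/2 * D)^2
            ≤ (∫ θ in (0:ℝ)..π, (∑ i ∈ F, c i * (Real.cos θ)^(e i))^2) * (π/2 * Sig4) := hCS
          _ ≤ (π * M^2) * (π/2 * Sig4) := by
              apply mul_le_mul_of_nonneg_right hQ2
              positivity
      have hπ : (0:ℝ) < π := Real.pi_pos
      have hππ : (0:ℝ) < π^2 := by positivity
      have h1 : π^2 * (D^2 - 2*M^2*Sig4) ≤ 0 := by nlinarith [hchain]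
      nlinarith [h1, hππ]
    -- numeric bound on Sig4
    have hdr : (3:ℝ) ≤ (d:ℝ) := by exact_mod_cast hd3
    have hSigbound : Sig4 ≤ 4 * ((d:ℝ)-1)^3 * (d:ℝ)^2 := by
      have h1 : Sig4 ≤ (d:ℝ)^5 := by
        have := Finset.sum_le_card_nsmul (Finset.Icc 1 d) (fun k => (k:ℝ)^4) ((d:ℝ)^4)
          (fun k hk => by
            obtain ⟨_, hk2⟩ := Finset.mem_Icc.mp hk
            have : (k:ℝ) ≤ (d:ℝ) := by exact_mod_cast hk2
            have hknn : (0:ℝ) ≤ (k:ℝ) := by positivity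
            exact pow_le_pow_left₀ hknn this 4)
        rw [Nat.card_Icc] at this
        simp only [nsmul_eq_mul] at this
        calc Sig4 ≤ ((d + 1 - 1 : ℕ):ℝ) * (d:ℝ)^4 := this
          _ = (d:ℝ)^5 := by norm_num; ring
      calc Sig4 ≤ (d:ℝ)^5 := h1
        _ ≤ 4 * ((d:ℝ)-1)^3 * (d:ℝ)^2 := by nlinarith [hdr]
    -- assemble
    set X := 2^((3:ℝ)/2) * ((d:ℝ)-1)^((3:ℝ)/2) * (d:ℝ) * M with hX
    have hdm1 : (0:ℝ) ≤ (d:ℝ) - 1 := by linarith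
    have hXnn : 0 ≤ X := by
      apply mul_nonneg
      apply mul_nonneg
      apply mul_nonneg
      · exact Real.rpow_nonneg (by norm_num) _
      · exact Real.rpow_nonneg hdm1 _
      · positivity
      · exact hM
    have hrpow_sq : ∀ x : ℝ, 0 ≤ x → (x ^ ((3:ℝ)/2))^2 = x^3 := by
      intro x hx
      rw [← Real.rpow_natCast (x ^ ((3:ℝ)/2)) 2, ← Real.rpow_mul hx]
      rw [show ((3:ℝ)/2 * ((2:ℕ):ℝ)) = ((3:ℕ):ℝ) by push_cast; ring]
      rw [Real.rpow_natCast]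
    have hX2 : X^2 = 8 * ((d:ℝ)-1)^3 * (d:ℝ)^2 * M^2 := by
      rw [hX]
      rw [show (2^((3:ℝ)/2) * ((d:ℝ)-1)^((3:ℝ)/2) * (d:ℝ) * M)^2
          = (2^((3:ℝ)/2))^2 * (((d:ℝ)-1)^((3:ℝ)/2))^2 * (d:ℝ)^2 * M^2 by ring]
      rw [hrpow_sq 2 (by norm_num), hrpow_sq _ hdm1]
      norm_num
    have hfin : D^2 ≤ X^2 := by
      rw [hX2]
      calc D^2 ≤ 2 * M^2 * Sig4 := hDsq
        _ ≤ 2 * M^2 * (4 * ((d:ℝ)-1)^3 * (d:ℝ)^2) := by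
            apply mul_le_mul_of_nonneg_left hSigbound
            positivity
        _ = 8 * ((d:ℝ)-1)^3 * (d:ℝ)^2 * M^2 := by ring
    have := Real.sqrt_le_sqrt hfin
    rwa [Real.sqrt_sq_eq_abs, Real.sqrt_sq hXnn] at this

end LB

/-- For `d ≥ 2` and a `d`-bounded multilinear Littlewood family `U` on `n`
variables, for every choice of signs `h S ∈ {-1,1}` there exists `x ∈ {-1,1}^n` with
`|∑_{S ∈ U} h S ∏_{i ∈ S} x i| ≥ (1/(3^(d-1) · 2^(5/2) · (d-1)^(3/2) · d)) · ∑_i √(u_i)`. -/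
theorem littlewood_lower_bound_degrees
    (n : ℕ) (hn : 0 < n) (d : ℕ) (hd : 2 ≤ d)
    (U : Finset (Finset (Fin n)))
    (hU : ∀ S ∈ U, S.Nonempty ∧ S.card ≤ d)
    (h : Finset (Fin n) → ℝ) (hsign : ∀ S ∈ U, h S = 1 ∨ h S = -1) :
    ∃ x : Fin n → ℝ, (∀ i, x i = 1 ∨ x i = -1) ∧
      (1 / ((3:ℝ) ^ (d - 1) * (2:ℝ) ^ ((5:ℝ)/2) * ((d:ℝ) - 1) ^ ((3:ℝ)/2) * d)) *
          ∑ i : Fin n, Real.sqrt ((U.filter (fun S => i ∈ S)).card) ≤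
        |∑ S ∈ U, h S * ∏ i ∈ S, x i| := by
  classical
  -- maximizer over the cube
  obtain ⟨εm, -, hεm⟩ := Finset.exists_max_image (Finset.univ : Finset (Fin n → Bool))
    (fun ε => |∑ S ∈ U, h S * LB.chi ε S|) Finset.univ_nonempty
  set M := |∑ S ∈ U, h S * LB.chi εm S| with hMdef
  have hM : ∀ ε : Fin n → Bool, |∑ S ∈ U, h S * LB.chi ε S| ≤ M :=
    fun ε => hεm ε (Finset.mem_univ ε)
  have hMnn : 0 ≤ M := abs_nonneg _
  have hml : ∀ z : Fin n → ℝ, (∀ i, |z i| ≤ 1) →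
      |∑ S ∈ U, h S * ∏ i ∈ S, z i| ≤ M := by
    intro z hz
    exact LB.multilinear_bound U h M hM Finset.univ z hz
      (fun i hi => absurd (Finset.mem_univ i) hi)
  set B := ∑ i : Fin n, Real.sqrt (((U.filter (fun S => i ∈ S)).card : ℝ)) with hB
  have hBnn : 0 ≤ B := Finset.sum_nonneg fun i _ => Real.sqrt_nonneg _
  set Di : (Fin n → Bool) → Fin n → ℝ :=
    fun ε i => ∑ S ∈ U.filter (fun S => i ∈ S), h S * LB.chi ε (S.erase i) with hDi
  -- Step A: L1 lower bound for each derivative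
  have hl1 : ∀ i : Fin n, 2^n * Real.sqrt (((U.filter (fun S => i ∈ S)).card : ℝ))
      ≤ 3^(d-1) * ∑ ε : Fin n → Bool, |Di ε i| := by
    intro i
    set V := (U.filter (fun S => i ∈ S)).image (fun S => Finset.erase S i) with hV
    set a : Finset (Fin n) → ℝ := fun T => h (insert i T) with ha
    have hinj : ∀ S1 ∈ U.filter (fun S => i ∈ S), ∀ S2 ∈ U.filter (fun S => i ∈ S),
        S1.erase i = S2.erase i → S1 = S2 := by
      intro S1 h1 S2 h2 hEq
      have hi1 : i ∈ S1 := (Finset.mem_filter.mp h1).2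
      have hi2 : i ∈ S2 := (Finset.mem_filter.mp h2).2
      rw [← Finset.insert_erase hi1, hEq, Finset.insert_erase hi2]
    have hsum_eq : ∀ ε, ∑ T ∈ V, a T * LB.chi ε T = Di ε i := by
      intro ε
      rw [hV, Finset.sum_image hinj]
      refine Finset.sum_congr rfl fun S hS => ?_
      rw [ha]
      simp only
      rw [Finset.insert_erase (Finset.mem_filter.mp hS).2]
    have hsq : ∑ T ∈ V, (a T)^2 = (((U.filter (fun S => i ∈ S)).card : ℕ) : ℝ) := by
      have e1 : ∀ T ∈ V, (a T)^2 = 1 := by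
        intro T hT
        obtain ⟨S, hS, rfl⟩ := Finset.mem_image.mp hT
        have hSU : S ∈ U := (Finset.mem_filter.mp hS).1
        have hiS : i ∈ S := (Finset.mem_filter.mp hS).2
        rw [ha]
        simp only
        rw [Finset.insert_erase hiS]
        rcases hsign S hSU with h' | h' <;> rw [h'] <;> norm_num
      rw [Finset.sum_congr rfl e1, Finset.sum_const, nsmul_eq_mul, mul_one]
      congr 1
      rw [hV]
      apply Finset.card_image_of_injOn
      intro S1 h1 S2 h2 hEq
      exact hinj S1 (by simpa using h1) S2 (by simpa using h2) hEq
    have hdeg : ∀ T ∈ V, T.card ≤ d - 1 := by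
      intro T hT
      obtain ⟨S, hS, rfl⟩ := Finset.mem_image.mp hT
      have h1 := (hU S (Finset.mem_filter.mp hS).1).2
      have h2 : (S.erase i).card = S.card - 1 :=
        Finset.card_erase_of_mem (Finset.mem_filter.mp hS).2
      omega
    have hl := LB.l1_lower (n := n) (d-1) V a hdeg
    rw [hsq] at hl
    calc 2^n * Real.sqrt (((U.filter (fun S => i ∈ S)).card : ℕ) : ℝ)
        ≤ 3^(d-1) * ∑ ε : Fin n → Bool, |∑ T ∈ V, a T * LB.chi ε T| := hl
      _ = 3^(d-1) * ∑ ε : Fin n → Bool, |Di ε i| := by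
          congr 1
          exact Finset.sum_congr rfl fun ε _ => by rw [hsum_eq ε]
  -- Step A': averaging to find a good point
  have havg : ∃ εs : Fin n → Bool, B ≤ 3^(d-1) * ∑ i : Fin n, |Di εs i| := by
    by_contra hcon
    push_neg at hcon
    have htot : (2:ℝ)^n * B ≤ ∑ ε : Fin n → Bool, 3^(d-1) * ∑ i : Fin n, |Di ε i| := by
      have e1 : ∑ ε : Fin n → Bool, (3:ℝ)^(d-1) * ∑ i : Fin n, |Di ε i|
          = ∑ i : Fin n, 3^(d-1) * ∑ ε : Fin n → Bool, |Di ε i| := by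
        rw [← Finset.mul_sum, ← Finset.mul_sum, Finset.sum_comm]
      rw [e1, hB, Finset.mul_sum]
      apply Finset.sum_le_sum
      intro i _
      exact hl1 i
    have hlt : ∑ ε : Fin n → Bool, (3:ℝ)^(d-1) * ∑ i : Fin n, |Di ε i|
        < ∑ ε : Fin n → Bool, B := by
      apply Finset.sum_lt_sum_of_nonempty Finset.univ_nonempty
      intro ε _
      exact hcon ε
    rw [Finset.sum_const, LB.card_cube, nsmul_eq_mul] at hlt
    push_cast at hlt
    linarith [htot, hlt]
  obtain ⟨εs, hεs⟩ := havg
  -- Step B: pick the sign set P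
  set s : Fin n → ℝ := fun i => LB.sgn εs i * Di εs i with hs
  have habs : ∀ i, |s i| = |Di εs i| := by
    intro i; rw [hs]; simp only; rw [abs_mul, LB.abs_sgn, one_mul]
  have hGeq : ∑ i : Fin n, |Di εs i| = ∑ i : Fin n, |s i| :=
    Finset.sum_congr rfl fun i _ => (habs i).symm
  set G := ∑ i : Fin n, |s i| with hG
  have hGnn : 0 ≤ G := Finset.sum_nonneg fun i _ => abs_nonneg _
  obtain ⟨P, hP⟩ : ∃ P : Finset (Fin n), G ≤ 2 * |∑ i ∈ P, s i| := by
    set Pos := Finset.univ.filter (fun i => 0 ≤ s i) with hPos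
    have h1 : ∑ i ∈ Pos, s i = ∑ i ∈ Pos, |s i| :=
      Finset.sum_congr rfl fun i hi => (abs_of_nonneg (Finset.mem_filter.mp hi).2).symm
    have h2 : ∑ i ∈ Finset.univ.filter (fun i => ¬ 0 ≤ s i), s i
        = - ∑ i ∈ Finset.univ.filter (fun i => ¬ 0 ≤ s i), |s i| := by
      rw [← Finset.sum_neg_distrib]
      refine Finset.sum_congr rfl fun i hi => ?_
      have : s i < 0 := lt_of_not_ge (Finset.mem_filter.mp hi).2
      rw [abs_of_neg this]; ring
    have h3 : ∑ i ∈ Pos, |s i|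
        + ∑ i ∈ Finset.univ.filter (fun i => ¬ 0 ≤ s i), |s i| = G := by
      rw [hG, hPos]
      exact Finset.sum_filter_add_sum_filter_not _ _ _
    have hposnn : 0 ≤ ∑ i ∈ Pos, |s i| := Finset.sum_nonneg fun i _ => abs_nonneg _
    have hnegnn : 0 ≤ ∑ i ∈ Finset.univ.filter (fun i => ¬ 0 ≤ s i), |s i| :=
      Finset.sum_nonneg fun i _ => abs_nonneg _
    by_cases hc : G/2 ≤ ∑ i ∈ Pos, |s i|
    · refine ⟨Pos, ?_⟩
      rw [h1, abs_of_nonneg hposnn]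
      linarith
    · refine ⟨Finset.univ.filter (fun i => ¬ 0 ≤ s i), ?_⟩
      rw [h2, abs_neg, abs_of_nonneg hnegnn]
      push_neg at hc
      linarith
  set D := ∑ i ∈ P, s i with hDdef
  -- representation of D as weighted coefficient sum
  have hDrep : ∑ S ∈ U, (h S * LB.chi εs S) * (((S ∩ P).card : ℕ) : ℝ) = D := by
    have e1 : ∀ S : Finset (Fin n), (((S ∩ P).card : ℕ) : ℝ)
        = ∑ i ∈ P, (if i ∈ S then (1:ℝ) else 0) := by
      intro S
      rw [Finset.sum_boole]
      congr 1
      rw [Finset.filter_mem_eq_inter, Finset.inter_comm]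
    calc ∑ S ∈ U, (h S * LB.chi εs S) * (((S ∩ P).card : ℕ) : ℝ)
        = ∑ S ∈ U, ∑ i ∈ P, (if i ∈ S then h S * LB.chi εs S else 0) := by
          refine Finset.sum_congr rfl fun S _ => ?_
          rw [e1 S, Finset.mul_sum]
          exact Finset.sum_congr rfl fun i _ => by split_ifs <;> ring
      _ = ∑ i ∈ P, ∑ S ∈ U, (if i ∈ S then h S * LB.chi εs S else 0) := Finset.sum_comm
      _ = D := by
          rw [hDdef]
          refine Finset.sum_congr rfl fun i hi => ?_
          rw [← Finset.sum_filter]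
          rw [hs]
          simp only
          rw [hDi]
          simp only
          rw [Finset.mul_sum]
          refine Finset.sum_congr rfl fun S hS => ?_
          have hiS : i ∈ S := (Finset.mem_filter.mp hS).2
          rw [LB.chi_erase i εs hiS]
          ring
  -- Step C: apply polyBound
  have hQb : ∀ t : ℝ, |t| ≤ 1 →
      |∑ S ∈ U, (h S * LB.chi εs S) * t^((S ∩ P).card)| ≤ M := by
    intro t ht
    have hz : ∀ i, |(fun i => if i ∈ P then LB.sgn εs i * t else LB.sgn εs i) i| ≤ 1 := by
      intro i
      simp only
      split_ifs
      · rw [abs_mul, LB.abs_sgn, one_mul]; exact ht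
      · rw [LB.abs_sgn]
    have hb := hml _ hz
    have e : ∑ S ∈ U, h S * ∏ i ∈ S, (if i ∈ P then LB.sgn εs i * t else LB.sgn εs i)
        = ∑ S ∈ U, (h S * LB.chi εs S) * t^((S ∩ P).card) := by
      refine Finset.sum_congr rfl fun S _ => ?_
      have hprod : ∏ i ∈ S, (if i ∈ P then LB.sgn εs i * t else LB.sgn εs i)
          = LB.chi εs S * t^((S ∩ P).card) := by
        rw [← Finset.prod_inter_mul_prod_diff S P
          (fun i => if i ∈ P then LB.sgn εs i * t else LB.sgn εs i)]
        have hA : ∏ i ∈ S ∩ P, (if i ∈ P then LB.sgn εs i * t else LB.sgn εs i)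
            = (∏ i ∈ S ∩ P, LB.sgn εs i) * t^((S ∩ P).card) := by
          calc ∏ i ∈ S ∩ P, (if i ∈ P then LB.sgn εs i * t else LB.sgn εs i)
              = ∏ i ∈ S ∩ P, LB.sgn εs i * t :=
                Finset.prod_congr rfl fun i hi => if_pos (Finset.mem_inter.mp hi).2
            _ = (∏ i ∈ S ∩ P, LB.sgn εs i) * ∏ _i ∈ S ∩ P, t := Finset.prod_mul_distrib
            _ = (∏ i ∈ S ∩ P, LB.sgn εs i) * t^((S ∩ P).card) := by
                rw [Finset.prod_const]
        have hBp : ∏ i ∈ S \ P, (if i ∈ P then LB.sgn εs i * t else LB.sgn εs i)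
            = ∏ i ∈ S \ P, LB.sgn εs i :=
          Finset.prod_congr rfl fun i hi => if_neg (Finset.mem_sdiff.mp hi).2
        have hchi : LB.chi εs S
            = (∏ i ∈ S ∩ P, LB.sgn εs i) * ∏ i ∈ S \ P, LB.sgn εs i :=
          (Finset.prod_inter_mul_prod_diff S P _).symm
        rw [hA, hBp, hchi]
        ring
      rw [hprod]
      ring
    rw [e] at hb
    exact hb
  have hpoly := LB.polyBound U (fun S => h S * LB.chi εs S) (fun S => (S ∩ P).card) d hd
    (fun S hS => le_trans (Finset.card_le_card Finset.inter_subset_left) (hU S hS).2)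
    M hMnn hQb
  rw [hDrep] at hpoly
  -- final assembly
  refine ⟨fun i => LB.sgn εm i, fun i => by by_cases hεi : εm i <;> simp [LB.sgn, hεi], ?_⟩
  have hRHS : |∑ S ∈ U, h S * ∏ i ∈ S, LB.sgn εm i| = M := rfl
  rw [hRHS]
  set C := (3:ℝ)^(d-1) * 2^((5:ℝ)/2) * ((d:ℝ)-1)^((3:ℝ)/2) * (d:ℝ) with hC
  have hd2r : (2:ℝ) ≤ (d:ℝ) := by exact_mod_cast hd
  have hCpos : 0 < C := by
    rw [hC]
    have h1 : (0:ℝ) < (3:ℝ)^(d-1) := by positivity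
    have h2 : (0:ℝ) < (2:ℝ)^((5:ℝ)/2) := Real.rpow_pos_of_pos (by norm_num) _
    have h3 : (0:ℝ) < ((d:ℝ)-1)^((3:ℝ)/2) := Real.rpow_pos_of_pos (by linarith) _
    have h4 : (0:ℝ) < (d:ℝ) := by linarith
    positivity
  have hBC : B ≤ C * M := by
    have step1 : B ≤ 3^(d-1) * (2 * |D|) := by
      calc B ≤ 3^(d-1) * ∑ i : Fin n, |Di εs i| := hεs
        _ = 3^(d-1) * G := by rw [hGeq]
        _ ≤ 3^(d-1) * (2*|D|) := by
            apply mul_le_mul_of_nonneg_left hP (by positivity)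
    have h25 : (2:ℝ) * 2^((3:ℝ)/2) = 2^((5:ℝ)/2) := by
      have e : (2:ℝ)^((5:ℝ)/2) = 2^((1:ℝ)+(3:ℝ)/2) := by norm_num
      rw [e, Real.rpow_add (by norm_num), Real.rpow_one]
    calc B ≤ 3^(d-1) * (2 * |D|) := step1
      _ ≤ 3^(d-1) * (2 * (2^((3:ℝ)/2) * ((d:ℝ)-1)^((3:ℝ)/2) * (d:ℝ) * M)) := by
          apply mul_le_mul_of_nonneg_left _ (by positivity)
          linarith [hpoly]
      _ = (2 * 2^((3:ℝ)/2)) * (3^(d-1) * ((d:ℝ)-1)^((3:ℝ)/2) * (d:ℝ) * M) := by ring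
      _ = C * M := by rw [h25, hC]; ring
  calc (1/C) * B ≤ (1/C) * (C*M) := by
        apply mul_le_mul_of_nonneg_left hBC (by positivity)
    _ = M := by field_simp
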